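/- Let k be an algebraically closed field of characteristic 2 and f = z^2 + x*y^2 + x*y*z + w*x^2 (type D_4^1 B_2). Then: (1) the singular locus of the hypersurface f = 0 is the line {x = y = z = 0}; and (2) f ∉ (x^2, y^2, z^2, w^2) in k[x,y,z,w], so the hypersurface is F-pure at the origin by Fedder's criterion. -/

import Mathlib

open MvPolynomial

lemma aux_coeff {k : Type*} [CommRing k] (m : Fin 4 →₀ ℕ) (i : Fin 4) (h : m i ≤ 1)
    (p : MvPolynomial (Fin 4) k) : coeff m (p * X i ^ 2) = 0 := by
  rw [sq, ← mul_assoc, coeff_mul_X']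
  split_ifs with hs
  · rw [coeff_mul_X']
    have : i ∉ (m - Finsupp.single i 1).support := by
      simp [Finsupp.mem_support_iff, Finsupp.tsub_apply]
      omega
    simp [this]
  · rfl

/-- Type `D_4^1 B_2`: for `f = z^2 + x*y^2 + x*y*z + w*x^2`,
(1) the singular locus is the line `{x = y = z = 0}`, and
(2) `f ∉ (x^2, y^2, z^2, w^2)`, so the hypersurface is F-pure at the origin. -/
theorem stmt_18 (k : Type*) [Field k] [IsAlgClosed k] [CharP k 2]
    (f : MvPolynomial (Fin 4) k)
    (hf : f = X 2 ^ 2 + X 0 * X 1 ^ 2 + X 0 * X 1 * X 2 + X 3 * X 0 ^ 2) :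
    (∀ a b c d : k, eval ![a, b, c, d] f = 0 →
      ((∀ i : Fin 4, eval ![a, b, c, d] (pderiv i f) = 0) ↔ (a = 0 ∧ b = 0 ∧ c = 0))) ∧
    f ∉ Ideal.span {(X 0 ^ 2 : MvPolynomial (Fin 4) k), X 1 ^ 2, X 2 ^ 2, X 3 ^ 2} := by
  subst hf
  constructor
  · intro a b c d hf0
    simp only [map_add, map_mul, map_pow, eval_X, Matrix.cons_val_zero, Matrix.cons_val_one,
      Matrix.head_cons, Matrix.cons_val_two, Matrix.tail_cons, Matrix.cons_val_three,
      Matrix.head_fin_const] at hf0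
    constructor
    · intro h
      have h3 := h 3
      have h0 := h 0
      simp only [map_add, pderiv_mul, pderiv_pow, pderiv_X, CharTwo.two_eq_zero] at h3 h0
      simp at h3 h0
      subst h3
      simp only [mul_zero, zero_mul, add_zero, zero_add] at hf0 h0
      have hc : c = 0 := by
        have := sq_eq_zero_iff.mp (by linear_combination hf0)
        exact this
      subst hc
      have hb : b = 0 := by
        have : b ^ 2 = 0 := by linear_combination h0
        exact sq_eq_zero_iff.mp this
      exact ⟨rfl, hb, rfl⟩
    · rintro ⟨rfl, rfl, rfl⟩ i
      fin_cases i <;>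
        simp [pderiv_mul, pderiv_pow, CharTwo.two_eq_zero]
  · intro hmem
    set m : Fin 4 →₀ ℕ := Finsupp.single 0 1 + Finsupp.single 1 1 + Finsupp.single 2 1 with hm
    have hcoeff : coeff m (X 2 ^ 2 + X 0 * X 1 ^ 2 + X 0 * X 1 * X 2 + X 3 * X 0 ^ 2
        : MvPolynomial (Fin 4) k) = 1 := by
      simp only [hm, X, monomial_mul, monomial_pow, coeff_add, coeff_monomial, mul_one]
      norm_num [Finsupp.ext_iff, Fin.forall_fin_succ, Finsupp.single_apply]
      simp (config := {decide := true})
    have key : ∀ g ∈ Ideal.span {(X 0 ^ 2 : MvPolynomial (Fin 4) k), X 1 ^ 2, X 2 ^ 2, X 3 ^ 2},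
        ∀ r, coeff m (r * g) = 0 := by
      intro g hg
      refine Submodule.span_induction ?_ ?_ ?_ ?_ hg
      · rintro x hx r
        have hle : ∀ i : Fin 4, m i ≤ 1 := by
          intro i; fin_cases i <;> simp [hm, Finsupp.single_apply]
        simp only [Set.mem_insert_iff, Set.mem_singleton_iff] at hx
        rcases hx with rfl | rfl | rfl | rfl <;> exact aux_coeff m _ (hle _) r
      · intro r; simp
      · intro x y _ _ hx hy r
        simp [mul_add, hx r, hy r]
      · intro a x _ hx r
        rw [smul_eq_mul, ← mul_assoc]
        exact hx (r * a)
    have := key _ hmem 1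
    rw [one_mul, hcoeff] at this
    exact one_ne_zero this
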